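/- Let Q ⊂ ℝ^n be a full-dimensional simplicial convex polytope with 0 in its interior, with weight function a : V(Q) → ℝ_{>0}, satisfying Condition (1'): for every u ∈ V(Q) and v ∈ V(Q*), a(u)(1+⟨v,u⟩) equals either 0 or ε_Q. With the notation of Condition (1') below, one has for every j ∈ {1,…,r}: a(f_j)·f_j + Σ_{k ∈ φ^{−1}(j)} a(e_k)·e_k = 0. In particular, the map φ : {1,…,n} → {1,…,r} is surjective. -/

import Mathlib

open Matrix

/-- The polar dual `Q* = {v | ⟨v,u⟩ ≥ -1 for all u ∈ Q}`. -/
def polarDual {n : ℕ} (Q : Set (Fin n → ℝ)) : Set (Fin n → ℝ) :=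
  {v | ∀ u ∈ Q, -1 ≤ v ⬝ᵥ u}

/-- The set of numbers `a(u)(1 + ⟨v,u⟩)` for `u ∈ V(Q)`, `v ∈ V(Q*)`, `u ∉ F_v`;
`ε_Q` is its minimum. -/
def epsSet {n : ℕ} (VQ VQd : Finset (Fin n → ℝ)) (a : (Fin n → ℝ) → ℝ) : Set ℝ :=
  {x | ∃ u ∈ VQ, ∃ v ∈ VQd, v ⬝ᵥ u ≠ -1 ∧ x = a u * (1 + v ⬝ᵥ u)}

/-- Assume Condition (1'): `a(u)(1 + ⟨v,u⟩) ∈ {0, ε_Q}` for all `u ∈ V(Q)`,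
`v ∈ V(Q*)`.  Fix `v ∈ V(Q*)`, let `e_1, …, e_n` be the vertices of `F_v` with dual basis
`(e_1*, …, e_n*)`, let `f_1, …, f_r` be the remaining vertices of `Q`, and for each `k` let
`F_k` be the facet adjacent to `F_v` across the ridge spanned by `{e_i : i ≠ k}`, with
vertices `{e_i : i ≠ k} ∪ {f_{φ(k)}}` and corresponding dual vertex `v_k ∈ V(Q*)`.  Then for every
`j ∈ {1,…,r}`: `a(f_j)·f_j + Σ_{k ∈ φ⁻¹(j)} a(e_k)·e_k = 0`; in particular `φ` is
surjective. -/
theorem condition1'_relation_and_surjective {n : ℕ} (hn : 1 ≤ n)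
    (VQ VQd : Finset (Fin n → ℝ))
    -- `VQ` is the vertex set of the polytope `Q = conv(VQ)`
    (hVQ : (VQ : Set (Fin n → ℝ)) =
      Set.extremePoints ℝ (convexHull ℝ (VQ : Set (Fin n → ℝ))))
    -- `0` lies in the interior of `Q` (in particular `Q` is full-dimensional)
    (h0 : (0 : Fin n → ℝ) ∈ interior (convexHull ℝ (VQ : Set (Fin n → ℝ))))
    -- `VQd` is the vertex set of the polar dual `Q*`
    (hVQd : (VQd : Set (Fin n → ℝ)) =
      Set.extremePoints ℝ (polarDual (convexHull ℝ (VQ : Set (Fin n → ℝ)))))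
    -- `Q` is simplicial: every facet has exactly `n` vertices
    (hsimp : ∀ v ∈ VQd, (VQ.filter fun u => v ⬝ᵥ u = -1).card = n)
    -- the weight function `a : V(Q) → ℝ_{>0}`
    (a : (Fin n → ℝ) → ℝ) (ha : ∀ u ∈ VQ, 0 < a u)
    -- `ε` is the minimum `ε_Q`
    (ε : ℝ) (hε : IsLeast (epsSet VQ VQd a) ε)
    -- Condition (1')
    (hcond : ∀ u ∈ VQ, ∀ v ∈ VQd, a u * (1 + v ⬝ᵥ u) = 0 ∨ a u * (1 + v ⬝ᵥ u) = ε)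
    -- fix `v ∈ V(Q*)`; `e_1, …, e_n` are the vertices of the facet `F_v`
    (v : Fin n → ℝ) (hv : v ∈ VQd)
    (e : Fin n → (Fin n → ℝ)) (he : Function.Injective e)
    (heV : ∀ i, e i ∈ VQ) (heF : ∀ i, v ⬝ᵥ e i = -1)
    (heAll : ∀ u ∈ VQ, v ⬝ᵥ u = -1 → ∃ i, u = e i)
    -- `(e_1*, …, e_n*)` is the dual basis of `(e_1, …, e_n)`
    (estar : Fin n → (Fin n → ℝ))
    (hestar : ∀ i k, estar i ⬝ᵥ e k = if i = k then 1 else 0)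
    -- `f_1, …, f_r` are the remaining vertices of `Q`
    (r : ℕ) (f : Fin r → (Fin n → ℝ)) (hf : Function.Injective f)
    (hfV : ∀ j, f j ∈ VQ) (hef : ∀ j i, f j ≠ e i)
    (hVQef : (VQ : Set (Fin n → ℝ)) = Set.range e ∪ Set.range f)
    -- for each `k`, `F_k` is the facet of `Q` adjacent to `F_v` across the ridge spanned by
    -- `{e_i : i ≠ k}`; its vertices are `{e_i : i ≠ k} ∪ {f_{φ(k)}}` and its corresponding
    -- dual vertex is `vk k ∈ V(Q*)`
    (φ : Fin n → Fin r) (vk : Fin n → (Fin n → ℝ))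
    (hvkV : ∀ k, vk k ∈ VQd) (hvkne : ∀ k, vk k ≠ v)
    (hvke : ∀ k i, i ≠ k → vk k ⬝ᵥ e i = -1)
    (hvkf : ∀ k, vk k ⬝ᵥ f (φ k) = -1)
    (hvkAll : ∀ k, ∀ u ∈ VQ, vk k ⬝ᵥ u = -1 → (∃ i, i ≠ k ∧ u = e i) ∨ u = f (φ k)) :
    (∀ j : Fin r,
      a (f j) • f j + ∑ k ∈ Finset.univ.filter (fun k => φ k = j), a (e k) • e k = 0) ∧
    Function.Surjective φ := by
  classical
  set Q : Set (Fin n → ℝ) := convexHull ℝ (VQ : Set (Fin n → ℝ)) with hQ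
  have hQsub : ∀ u ∈ VQ, u ∈ Q := fun u hu => subset_convexHull ℝ _ hu
  have hdual : ∀ w ∈ VQd, ∀ u ∈ VQ, (-1 : ℝ) ≤ w ⬝ᵥ u := by
    intro w hw u hu
    have hw' : w ∈ polarDual Q := by
      have hmem : w ∈ (VQd : Set (Fin n → ℝ)) := hw
      rw [hVQd] at hmem
      exact hmem.1
    exact hw' u (hQsub u hu)
  -- Key consequence of Condition (1')
  have key : ∀ u ∈ VQ, ∀ w ∈ VQd, w ⬝ᵥ u ≠ -1 → a u * (1 + w ⬝ᵥ u) = ε := by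
    intro u hu w hw hne
    have h1 : 0 < 1 + w ⬝ᵥ u := by
      rcases lt_or_eq_of_le (hdual w hw u hu) with h' | h'
      · linarith
      · exact absurd h'.symm hne
    rcases hcond u hu w hw with h | h
    · exfalso; nlinarith [ha u hu]
    · exact h
  have hvf : ∀ j, v ⬝ᵥ f j ≠ -1 := by
    intro j h
    obtain ⟨i, hi⟩ := heAll (f j) (hfV j) h
    exact hef j i hi
  have hvfj : ∀ j, a (f j) * (1 + v ⬝ᵥ f j) = ε := fun j =>
    key _ (hfV j) v hv (hvf j)
  have hεpos : 0 < ε := by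
    obtain ⟨z, hzV, w, hwV, hwne, hz⟩ := hε.1
    have h1 : 0 < 1 + w ⬝ᵥ z := by
      rcases lt_or_eq_of_le (hdual w hwV z hzV) with h' | h'
      · linarith
      · exact absurd h'.symm hwne
    have := ha z hzV
    nlinarith
  -- matrix inverses
  set M : Matrix (Fin n) (Fin n) ℝ := Matrix.of estar with hM
  set N : Matrix (Fin n) (Fin n) ℝ := (Matrix.of e)ᵀ with hN
  have hMN : M * N = 1 := by
    ext i k
    have h1 : (M * N) i k = estar i ⬝ᵥ e k := by
      simp [Matrix.mul_apply, dotProduct, hM, hN, Matrix.transpose_apply]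
    rw [h1, hestar i k, Matrix.one_apply]
  have hNM : N * M = 1 := mul_eq_one_comm.mp hMN
  have killStar : ∀ w : Fin n → ℝ, (∀ i, estar i ⬝ᵥ w = 0) → w = 0 := by
    intro w hw
    have h1 : M *ᵥ w = 0 := by
      ext i
      simpa [Matrix.mulVec, hM, dotProduct] using hw i
    calc w = (N * M) *ᵥ w := by rw [hNM, Matrix.one_mulVec]
      _ = N *ᵥ (M *ᵥ w) := by rw [Matrix.mulVec_mulVec]
      _ = 0 := by rw [h1, Matrix.mulVec_zero]
  have killE : ∀ w : Fin n → ℝ, (∀ i, w ⬝ᵥ e i = 0) → w = 0 := by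
    intro w hw
    have h1 : Nᵀ *ᵥ w = 0 := by
      ext i
      have h2 : e i ⬝ᵥ w = 0 := by rw [dotProduct_comm]; exact hw i
      simpa [Matrix.mulVec, hN, dotProduct] using h2
    have h2 : Mᵀ * Nᵀ = 1 := by
      rw [← Matrix.transpose_mul, hNM, Matrix.transpose_one]
    calc w = (Mᵀ * Nᵀ) *ᵥ w := by rw [h2, Matrix.one_mulVec]
      _ = Mᵀ *ᵥ (Nᵀ *ᵥ w) := by rw [Matrix.mulVec_mulVec]
      _ = 0 := by rw [h1, Matrix.mulVec_zero]
  -- the coefficient `c k`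
  have hvke' : ∀ k, vk k ⬝ᵥ e k ≠ -1 := by
    intro k h
    rcases hvkAll k (e k) (heV k) h with ⟨i, hik, hei⟩ | hek
    · exact hik (he hei).symm
    · exact hef (φ k) k hek.symm
  set c : Fin n → ℝ := fun k => vk k ⬝ᵥ e k + 1 with hc
  have hck : ∀ k, a (e k) * c k = ε := by
    intro k
    have h1 := key (e k) (heV k) (vk k) (hvkV k) (hvke' k)
    simp only [hc]
    linarith [h1, mul_add (a (e k)) (1 : ℝ) (vk k ⬝ᵥ e k),
      mul_add (a (e k)) (vk k ⬝ᵥ e k) (1 : ℝ)]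
  have hckpos : ∀ k, 0 < c k := by
    intro k
    have h1 := ha (e k) (heV k)
    nlinarith [hck k]
  -- `vk k = v + c k • estar k`
  have hvkeq : ∀ k, vk k = v + c k • estar k := by
    intro k
    have h0' : ∀ i, (vk k - (v + c k • estar k)) ⬝ᵥ e i = 0 := by
      intro i
      rw [sub_dotProduct, add_dotProduct, smul_dotProduct, hestar k i, heF i]
      rcases eq_or_ne i k with rfl | hik
      · rw [if_pos rfl, smul_eq_mul, mul_one]
        simp only [hc]
        ring
      · rw [hvke k i hik, if_neg (Ne.symm hik)]
        simp
    exact sub_eq_zero.mp (killE _ h0')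
  -- the coordinates of `f j` in the basis `e`
  have hx : ∀ k j, a (f j) * (estar k ⬝ᵥ f j) = if φ k = j then -(a (e k)) else 0 := by
    intro k j
    have hpair : vk k ⬝ᵥ f j = v ⬝ᵥ f j + c k * (estar k ⬝ᵥ f j) := by
      rw [hvkeq k, add_dotProduct, smul_dotProduct, smul_eq_mul]
    by_cases hφ : φ k = j
    · rw [if_pos hφ]
      have h1 : vk k ⬝ᵥ f j = -1 := by rw [← hφ]; exact hvkf k
      have h2a : c k * (estar k ⬝ᵥ f j) = -1 - v ⬝ᵥ f j := by
        rw [hpair] at h1; linarith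
      have h2 : a (f j) * (c k * (estar k ⬝ᵥ f j)) = -ε := by
        rw [h2a]
        linear_combination -hvfj j
      have h3 : ε * (a (f j) * (estar k ⬝ᵥ f j)) = ε * (-(a (e k))) := by
        calc ε * (a (f j) * (estar k ⬝ᵥ f j))
            = (a (e k) * c k) * (a (f j) * (estar k ⬝ᵥ f j)) := by rw [hck k]
          _ = a (e k) * (a (f j) * (c k * (estar k ⬝ᵥ f j))) := by ring
          _ = a (e k) * (-ε) := by rw [h2]
          _ = ε * (-(a (e k))) := by ring
      exact mul_left_cancel₀ (ne_of_gt hεpos) h3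
    · rw [if_neg hφ]
      have hne2 : vk k ⬝ᵥ f j ≠ -1 := by
        intro h
        rcases hvkAll k (f j) (hfV j) h with ⟨i, _, h2⟩ | h2
        · exact hef j i h2
        · exact hφ (hf h2).symm
      have hvkfj : a (f j) * (1 + vk k ⬝ᵥ f j) = ε :=
        key _ (hfV j) _ (hvkV k) hne2
      have haj := ha (f j) (hfV j)
      have h4 : (1 : ℝ) + vk k ⬝ᵥ f j = 1 + v ⬝ᵥ f j :=
        mul_left_cancel₀ (ne_of_gt haj) (hvkfj.trans (hvfj j).symm)
      have h5 : c k * (estar k ⬝ᵥ f j) = 0 := by rw [hpair] at h4; linarith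
      have h6 : estar k ⬝ᵥ f j = 0 :=
        (mul_eq_zero.mp h5).resolve_left (ne_of_gt (hckpos k))
      rw [h6, mul_zero]
  -- main identity
  have main : ∀ j : Fin r,
      a (f j) • f j + ∑ k ∈ Finset.univ.filter (fun k => φ k = j), a (e k) • e k = 0 := by
    intro j
    apply killStar
    intro i
    have hds : estar i ⬝ᵥ (∑ k ∈ Finset.univ.filter (fun k => φ k = j), a (e k) • e k)
        = ∑ k ∈ Finset.univ.filter (fun k => φ k = j), estar i ⬝ᵥ (a (e k) • e k) := by
      simp only [dotProduct, Finset.sum_apply, Finset.mul_sum]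
      exact Finset.sum_comm
    rw [dotProduct_add, dotProduct_smul, hds]
    have hsum : ∑ k ∈ Finset.univ.filter (fun k => φ k = j), estar i ⬝ᵥ a (e k) • e k
        = if φ i = j then a (e i) else 0 := by
      have h7 : ∀ k ∈ Finset.univ.filter (fun k => φ k = j),
          estar i ⬝ᵥ a (e k) • e k = if i = k then a (e k) else 0 := by
        intro k _
        rw [dotProduct_smul, smul_eq_mul, hestar i k]
        by_cases h : i = k <;> simp [h]
      rw [Finset.sum_congr rfl h7, Finset.sum_ite_eq]
      simp [Finset.mem_filter]
    rw [hsum, smul_eq_mul, hx i j]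
    by_cases h : φ i = j <;> simp [h]
  refine ⟨main, ?_⟩
  -- surjectivity
  intro j
  by_contra hns
  push_neg at hns
  have hS : Finset.univ.filter (fun k => φ k = j) = ∅ := by
    rw [Finset.filter_eq_empty_iff]
    intro k _
    exact hns k
  have hmj := main j
  rw [hS, Finset.sum_empty, add_zero] at hmj
  have hfj0 : f j = 0 :=
    (smul_eq_zero.mp hmj).resolve_left (ne_of_gt (ha (f j) (hfV j)))
  have hext : (0 : Fin n → ℝ) ∈ Set.extremePoints ℝ Q := by
    rw [← hVQ]
    have := hfV j
    rwa [hfj0] at this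
  obtain ⟨δ, hδpos, hball⟩ := Metric.mem_nhds_iff.mp (mem_interior_iff_mem_nhds.mp h0)
  set x : Fin n → ℝ := fun _ => δ / 2 with hxdef
  have hxball : x ∈ Metric.ball (0 : Fin n → ℝ) δ := by
    rw [Metric.mem_ball, dist_zero_right]
    have h8 : ‖x‖ ≤ δ / 2 := by
      rw [pi_norm_le_iff_of_nonneg (by positivity)]
      intro i
      simp only [hxdef, Real.norm_eq_abs]
      exact le_of_eq (abs_of_nonneg (by positivity))
    linarith
  have hxball' : -x ∈ Metric.ball (0 : Fin n → ℝ) δ := by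
    rw [Metric.mem_ball, dist_zero_right, norm_neg]
    rw [Metric.mem_ball, dist_zero_right] at hxball
    exact hxball
  have hxQ : x ∈ Q := hball hxball
  have hxQ' : -x ∈ Q := hball hxball'
  have hseg : (0 : Fin n → ℝ) ∈ openSegment ℝ x (-x) := by
    refine ⟨1/2, 1/2, by norm_num, by norm_num, by norm_num, ?_⟩
    simp [smul_neg]
  have hx0 : x = 0 := hext.2 hxQ hxQ' hseg
  have : x ⟨0, hn⟩ = 0 := by rw [hx0]; rfl
  simp only [hxdef] at this
  linarith
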